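/- Let S be a commutative ring, W' and V' free abelian groups of rank n, and ∂^s: Sym_ℤ^s(W') ⊗ Λ_*^ℤ(V') → Sym_ℤ^{s+1}(W') ⊗ Λ_{*-1}^ℤ(V') the model-complex (Koszul) differential. Then ker(∂^s over S) ≅ S ⊗_ℤ ker(∂^s over ℤ); in particular the kernel of the differential Sym_S^s(W) ⊗_S Λ_*^S(V) → Sym_S^{s+1}(W) ⊗_S Λ_{*-1}^S(V) is a free S-module for any commutative ring S. -/

import Mathlib

/-!
STATEMENT 16: the kernel of the model-complex (Koszul) differential
`∂^s : Sym^s(W) ⊗ Λ^*(V) → Sym^{s+1}(W) ⊗ Λ^{*-1}(V)` commutes with base change from `ℤ`: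
`ker(∂^s over S) ≅ S ⊗_ℤ ker(∂^s over ℤ)`; in particular this kernel is a free
`S`-module for any commutative ring `S`.  The components are written in their standard
bases (`MIdx n s p →₀ S`), where the differential is `modelD`.
-/

/-- Index type for the standard basis of the degree-`p` part of the exterior algebra
on a free module with basis `Fin n`: subsets of `Fin n` of cardinality `p`. -/
abbrev ExtIdx (n p : ℕ) := {s : Finset (Fin n) // s.card = p}

/-- The Koszul differential `Λ^{p+1}(R^n) → Λ^p(R^n)` associated to `r : Fin n → R`:
the unique `R`-derivation determined by `e_j ↦ r j`, written in the standard basis. -/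
noncomputable def koszulD (R : Type*) [CommRing R] {n : ℕ} (r : Fin n → R) (p : ℕ) :
    (ExtIdx n (p + 1) →₀ R) →ₗ[R] (ExtIdx n p →₀ R) :=
  Finsupp.lsum R fun s => LinearMap.toSpanSingleton R _ <|
    ∑ i ∈ s.1.attach, ((-1 : R) ^ ((s.1.filter fun j => j < i.1).card) * r i.1) •
      Finsupp.single (⟨s.1.erase i.1, by
        simp [Finset.card_erase_of_mem i.2, s.2]⟩ : ExtIdx n p) (1 : R)

/-- Index type for the standard monomial basis of `Sym^s(R^n)`. -/
abbrev MonIdx (n s : ℕ) := {m : Fin n →₀ ℕ // (m.sum fun _ e => e) = s}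

/-- Basis index for `Sym^s(W) ⊗ Λ^p(V)` with `V`, `W` free of rank `n`. -/
abbrev MIdx (n s p : ℕ) := MonIdx n s × ExtIdx n p

/-- The differential `∂^s : Sym^s(W) ⊗ Λ^{p+1}(V) → Sym^{s+1}(W) ⊗ Λ^p(V)` of the model
complex, `∑ᵢ fᵢ ⊗ ∂/∂eᵢ`, written in the standard bases. -/
noncomputable def modelD (S : Type*) [CommRing S] (n s p : ℕ) :
    (MIdx n s (p + 1) →₀ S) →ₗ[S] (MIdx n (s + 1) p →₀ S) :=
  Finsupp.lsum S fun mt => LinearMap.toSpanSingleton S _ <|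
    ∑ i ∈ mt.2.1.attach, ((-1 : S) ^ ((mt.2.1.filter fun j => j < i.1).card)) •
      Finsupp.single
        ((⟨mt.1.1 + Finsupp.single i.1 1, by
            rw [Finsupp.sum_add_index' (fun _ => rfl) (fun _ _ _ => rfl), mt.1.2,
              Finsupp.sum_single_index rfl]⟩ : MonIdx n (s + 1)),
         (⟨mt.2.1.erase i.1, by simp [Finset.card_erase_of_mem i.2, mt.2.2]⟩ : ExtIdx n p)) (1 : S)


abbrev Amb (n : ℕ) := (Fin n →₀ ℕ) × Finset (Fin n)

noncomputable section
variable (S : Type*) [CommRing S] (n : ℕ)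

def Dbig : (Amb n →₀ S) →ₗ[S] (Amb n →₀ S) :=
  Finsupp.lsum S fun x => LinearMap.toSpanSingleton S _ <|
    ∑ i ∈ x.2, ((-1 : S) ^ ((x.2.filter fun j => j < i).card)) •
      Finsupp.single (x.1 + Finsupp.single i 1, x.2.erase i) (1 : S)

def Hbig : (Amb n →₀ S) →ₗ[S] (Amb n →₀ S) :=
  Finsupp.lsum S fun x => LinearMap.toSpanSingleton S _ <|
    if h : x.1.support.Nonempty then
      (if ∀ t ∈ x.2, x.1.support.min' h < t then
        Finsupp.single (x.1 - Finsupp.single (x.1.support.min' h) 1,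
          insert (x.1.support.min' h) x.2) (1 : S)
      else 0)
    else 0

variable {S n}

lemma Dbig_single (x : Amb n) :
    Dbig S n (Finsupp.single x 1) =
      ∑ i ∈ x.2, ((-1 : S) ^ ((x.2.filter fun j => j < i).card)) •
        Finsupp.single (x.1 + Finsupp.single i 1, x.2.erase i) (1 : S) := by
  simp [Dbig]

lemma Hbig_single (x : Amb n) (h : x.1.support.Nonempty)
    (hc : ∀ t ∈ x.2, x.1.support.min' h < t) :
    Hbig S n (Finsupp.single x 1) =
      Finsupp.single (x.1 - Finsupp.single (x.1.support.min' h) 1,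
        insert (x.1.support.min' h) x.2) (1 : S) := by
  simp [Hbig, dif_pos h, if_pos hc]
  rw [dif_neg (Finsupp.support_nonempty_iff.mp h)]

lemma Hbig_single_of_not (x : Amb n) (hc : ¬ ∃ (h : x.1.support.Nonempty),
      ∀ t ∈ x.2, x.1.support.min' h < t) :
    Hbig S n (Finsupp.single x 1) = 0 := by
  by_cases h : x.1.support.Nonempty
  · have : ¬ ∀ t ∈ x.2, x.1.support.min' h < t := fun hh => hc ⟨h, hh⟩
    simp [Hbig, dif_pos h, if_neg this]
  · simp [Hbig, dif_neg h]
    intro h'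
    exact absurd (Finsupp.support_nonempty_iff.mpr h') h

lemma min'_eq_of {α : Type*} [LinearOrder α] {s : Finset α} {h : s.Nonempty} {a : α}
    (ha : a ∈ s) (hb : ∀ b ∈ s, a ≤ b) : s.min' h = a :=
  le_antisymm (Finset.min'_le s a ha) (Finset.le_min' _ _ _ hb)

-- helpers from b.lean
lemma supp_add_single (m : Fin n →₀ ℕ) (i : Fin n) :
    (m + Finsupp.single i 1).support = insert i m.support := by
  ext a
  rcases eq_or_ne a i with rfl | h
  · simp
  · simp [Finsupp.mem_support_iff, Finsupp.single_eq_of_ne (Ne.symm h), h]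

lemma sub_add_single_cancel {m : Fin n →₀ ℕ} {j : Fin n} (h : m j ≠ 0) :
    m - Finsupp.single j 1 + Finsupp.single j 1 = m := by
  ext a
  rcases eq_or_ne a j with rfl | hne
  · simp only [Finsupp.add_apply, Finsupp.tsub_apply, Finsupp.single_eq_same]
    omega
  · simp [Finsupp.single_eq_of_ne' (Ne.symm hne)]

lemma sub_single_add_comm {m : Fin n →₀ ℕ} {j : Fin n} (i : Fin n) (h : m j ≠ 0) :
    m - Finsupp.single j 1 + Finsupp.single i 1 = m + Finsupp.single i 1 - Finsupp.single j 1 := by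
  ext a
  simp only [Finsupp.add_apply, Finsupp.tsub_apply]
  rcases eq_or_ne a j with rfl | hne
  · simp only [Finsupp.single_eq_same]; omega
  · simp [Finsupp.single_eq_of_ne' (Ne.symm hne)]

lemma add_sub_single_cancel (m : Fin n →₀ ℕ) (i : Fin n) :
    m + Finsupp.single i 1 - Finsupp.single i 1 = m := by
  ext a
  simp only [Finsupp.add_apply, Finsupp.tsub_apply]
  omega

lemma filter_insert_lt {T : Finset (Fin n)} {j i : Fin n} (hj : ∀ t ∈ T, j < t) (hi : i ∈ T) :
    ((insert j T).filter fun t => t < i).card = ((T.filter fun t => t < i).card) + 1 := by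
  rw [Finset.filter_insert, if_pos (hj i hi)]
  rw [Finset.card_insert_of_notMem]
  simp only [Finset.mem_filter]
  intro h
  exact absurd (hj j h.1) (lt_irrefl j)

lemma filter_min_empty {T : Finset (Fin n)} {j : Fin n} (hj : ∀ t ∈ T, j ≤ t) :
    ((insert j T).filter fun t => t < j) = ∅ := by
  rw [Finset.filter_insert, if_neg (lt_irrefl j)]
  rw [Finset.filter_eq_empty_iff]
  intro t ht
  exact not_lt.2 (hj t ht)

/-- THE HOMOTOPY IDENTITY -/
lemma homotopy_id (x : Amb n) (hm : x.1.support.Nonempty) :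
    Dbig S n (Hbig S n (Finsupp.single x (1:S)))
      + Hbig S n (Dbig S n (Finsupp.single x 1)) = Finsupp.single x 1 := by
  obtain ⟨m, T⟩ := x
  simp only at hm
  set j := m.support.min' hm with hj
  have hmj : m j ≠ 0 := Finsupp.mem_support_iff.mp (Finset.min'_mem _ hm)
  by_cases hc : ∀ t ∈ T, j < t
  · -- case 1 : pivot below all of T
    have hjT : j ∉ T := fun h => absurd (hc j h) (lt_irrefl j)
    -- first summand
    have h1 : Dbig S n (Hbig S n (Finsupp.single (m, T) (1:S)))
        = Finsupp.single (m, T) 1 +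
          ∑ i ∈ T, ((-1 : S) ^ ((T.filter fun t => t < i).card + 1)) •
            Finsupp.single (m + Finsupp.single i 1 - Finsupp.single j 1,
              insert j (T.erase i)) (1:S) := by
      rw [Hbig_single (m, T) hm hc, Dbig_single]
      simp only
      rw [Finset.sum_insert hjT]
      congr 1
      · rw [filter_min_empty (fun t ht => le_of_lt (hc t ht))]
        rw [sub_add_single_cancel hmj, Finset.erase_insert hjT]
        simp
      · refine Finset.sum_congr rfl fun i hi => ?_
        rw [filter_insert_lt hc hi, sub_single_add_comm i hmj,
          Finset.erase_insert_of_ne (ne_of_lt (hc i hi))]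
    -- second summand
    have h2 : Hbig S n (Dbig S n (Finsupp.single (m, T) (1:S)))
        = ∑ i ∈ T, ((-1 : S) ^ ((T.filter fun t => t < i).card)) •
            Finsupp.single (m + Finsupp.single i 1 - Finsupp.single j 1,
              insert j (T.erase i)) (1:S) := by
      rw [Dbig_single]
      simp only [map_sum, map_smul]
      refine Finset.sum_congr rfl fun i hi => ?_
      have hsupp : (m + Finsupp.single i 1).support.Nonempty := by
        rw [supp_add_single]; exact Finset.insert_nonempty _ _
      have hmin : (m + Finsupp.single i 1).support.min' hsupp = j := by
        refine min'_eq_of ?_ ?_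
        · rw [supp_add_single]
          exact Finset.mem_insert_of_mem (Finset.min'_mem _ hm)
        · intro b hb
          rw [supp_add_single] at hb
          rcases Finset.mem_insert.mp hb with rfl | hb
          · exact le_of_lt (hc b hi)
          · exact Finset.min'_le _ _ hb
      have hcond : ∀ t ∈ T.erase i, (m + Finsupp.single i 1).support.min' hsupp < t := by
        rw [hmin]; exact fun t ht => hc t (Finset.mem_of_mem_erase ht)
      rw [Hbig_single _ hsupp hcond, hmin]
    rw [h1, h2, add_assoc, ← Finset.sum_add_distrib]
    have hz : ∑ i ∈ T, (((-1 : S) ^ ((T.filter fun t => t < i).card + 1)) •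
            Finsupp.single (m + Finsupp.single i 1 - Finsupp.single j 1,
              insert j (T.erase i)) (1:S)
          + ((-1 : S) ^ ((T.filter fun t => t < i).card)) •
            Finsupp.single (m + Finsupp.single i 1 - Finsupp.single j 1,
              insert j (T.erase i)) (1:S)) = 0 := by
      refine Finset.sum_eq_zero fun i _ => ?_
      rw [← add_smul, pow_succ]
      ring_nf
      simp
    rw [hz, add_zero]
  · -- case 2 : some element of T is ≤ pivot
    push_neg at hc
    obtain ⟨t', ht'T, ht'⟩ := hc
    have hT : T.Nonempty := ⟨t', ht'T⟩
    set t0 := T.min' hT with ht0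
    have ht0j : t0 ≤ j := le_trans (Finset.min'_le _ _ ht'T) ht'
    have h1 : Hbig S n (Finsupp.single (m, T) (1:S)) = 0 := by
      refine Hbig_single_of_not _ ?_
      rintro ⟨h, hh⟩
      exact absurd (hh t' ht'T) (not_lt.2 ht')
    have h2 : Hbig S n (Dbig S n (Finsupp.single (m, T) (1:S)))
        = Finsupp.single (m, T) 1 := by
      rw [Dbig_single]
      simp only [map_sum, map_smul]
      rw [Finset.sum_eq_single_of_mem t0 (Finset.min'_mem _ hT)]
      · have hsupp : (m + Finsupp.single t0 1).support.Nonempty := by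
          rw [supp_add_single]; exact Finset.insert_nonempty _ _
        have hmin : (m + Finsupp.single t0 1).support.min' hsupp = t0 := by
          refine min'_eq_of ?_ ?_
          · rw [supp_add_single]; exact Finset.mem_insert_self _ _
          · intro b hb
            rw [supp_add_single] at hb
            rcases Finset.mem_insert.mp hb with rfl | hb
            · exact le_refl _
            · exact le_trans ht0j (Finset.min'_le _ _ hb)
        have hcond : ∀ t ∈ T.erase t0, (m + Finsupp.single t0 1).support.min' hsupp < t := by
          rw [hmin]
          intro t ht
          exact lt_of_le_of_ne (Finset.min'_le _ _ (Finset.mem_of_mem_erase ht))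
            (Ne.symm (Finset.ne_of_mem_erase ht))
        rw [Hbig_single _ hsupp hcond, hmin, add_sub_single_cancel,
          Finset.insert_erase (Finset.min'_mem _ hT)]
        have : (T.filter fun t => t < t0) = ∅ := by
          rw [Finset.filter_eq_empty_iff]
          exact fun t ht => not_lt.2 (Finset.min'_le _ _ ht)
        rw [this]
        simp
      · intro i hiT hine
        have hsupp : (m + Finsupp.single i 1).support.Nonempty := by
          rw [supp_add_single]; exact Finset.insert_nonempty _ _
        rw [Hbig_single_of_not _ ?_, smul_zero]
        rintro ⟨h, hh⟩
        have ht0e : t0 ∈ T.erase i := Finset.mem_erase.mpr ⟨fun he => hine (he ▸ rfl), Finset.min'_mem _ hT⟩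
        have := hh t0 ht0e
        -- but min' of support (m+e_i) is min j i ≥ t0
        have hge : t0 ≤ (m + Finsupp.single i 1).support.min' h := by
          apply Finset.le_min'
          intro b hb
          rw [supp_add_single] at hb
          rcases Finset.mem_insert.mp hb with rfl | hb
          · exact Finset.min'_le _ _ hiT
          · exact le_trans ht0j (Finset.min'_le _ _ hb)
        exact absurd this (not_lt.2 hge)
    rw [h1, map_zero, zero_add, h2]

lemma erase_erase_comm {T : Finset (Fin n)} (i k : Fin n) :
    (T.erase i).erase k = (T.erase k).erase i := by
  ext a; simp only [Finset.mem_erase]; tauto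

lemma sign_swap {T : Finset (Fin n)} {i k : Fin n} (hi : i ∈ T) (hk : k ∈ T) (hne : i ≠ k) :
    ((-1:S) ^ ((T.filter fun t => t < i).card)) *
        ((-1:S) ^ (((T.erase i).filter fun t => t < k).card)) =
      -(((-1:S) ^ ((T.filter fun t => t < k).card)) *
        ((-1:S) ^ (((T.erase k).filter fun t => t < i).card))) := by
  have key : ∀ a b : Fin n, a ∈ T → (((T.erase a).filter fun t => t < b).card) =
      ((T.filter fun t => t < b).card) - (if a < b then 1 else 0) := by
    intro a b ha
    rw [Finset.filter_erase]
    split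
    · rw [Finset.card_erase_of_mem (by simp [Finset.mem_filter, ha, *])]
    · rw [Finset.erase_eq_of_notMem (by simp only [Finset.mem_filter]; tauto)]
      omega
  rcases lt_or_gt_of_ne hne with h | h
  · have h1 := key i k hi
    have h2 := key k i hk
    rw [if_pos h] at h1
    rw [if_neg (not_lt.2 (le_of_lt h))] at h2
    have hpos : 1 ≤ (T.filter fun t => t < k).card :=
      Finset.card_pos.2 ⟨i, Finset.mem_filter.2 ⟨hi, h⟩⟩
    obtain ⟨b, hb⟩ : ∃ b, (T.filter fun t => t < k).card = b + 1 :=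
      ⟨_, (Nat.succ_pred_eq_of_pos hpos).symm⟩
    rw [h1, h2, hb]
    simp [pow_succ]
    ring
  · have h1 := key i k hi
    have h2 := key k i hk
    rw [if_neg (not_lt.2 (le_of_lt h))] at h1
    rw [if_pos h] at h2
    have hpos : 1 ≤ (T.filter fun t => t < i).card :=
      Finset.card_pos.2 ⟨k, Finset.mem_filter.2 ⟨hk, h⟩⟩
    obtain ⟨b, hb⟩ : ∃ b, (T.filter fun t => t < i).card = b + 1 :=
      ⟨_, (Nat.succ_pred_eq_of_pos hpos).symm⟩
    rw [h1, h2, hb]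
    simp [pow_succ]
    ring

lemma Dbig_Dbig (x : Amb n) : Dbig S n (Dbig S n (Finsupp.single x (1:S))) = 0 := by
  obtain ⟨m, T⟩ := x
  rw [Dbig_single, map_sum]
  have hterm : ∀ i ∈ T, Dbig S n (((-1 : S) ^ ((T.filter fun t => t < i).card)) •
        Finsupp.single (m + Finsupp.single i 1, T.erase i) (1:S)) =
      ∑ k ∈ T.erase i, (((-1 : S) ^ ((T.filter fun t => t < i).card)) *
          ((-1 : S) ^ (((T.erase i).filter fun t => t < k).card))) •
        Finsupp.single (m + Finsupp.single i 1 + Finsupp.single k 1,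
          (T.erase i).erase k) (1:S) := by
    intro i _
    rw [map_smul, Dbig_single]
    simp only [Finset.smul_sum, smul_smul]
  rw [Finset.sum_congr rfl hterm, Finset.sum_sigma']
  refine Finset.sum_involution (fun a _ => ⟨a.2, a.1⟩) ?_ ?_ ?_ ?_
  · intro a ha
    rw [Finset.mem_sigma] at ha
    obtain ⟨h1, h2⟩ := ha
    have hk : a.2 ∈ T := Finset.mem_of_mem_erase h2
    have hne : a.1 ≠ a.2 := (Finset.ne_of_mem_erase h2).symm
    have : (m + Finsupp.single a.1 1 + Finsupp.single a.2 1,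
        (T.erase a.1).erase a.2) = (m + Finsupp.single a.2 1 + Finsupp.single a.1 1,
        (T.erase a.2).erase a.1) := by
      rw [Prod.mk.injEq]
      exact ⟨add_right_comm _ _ _, erase_erase_comm _ _⟩
    rw [this, ← add_smul, sign_swap h1 hk hne, neg_add_cancel, zero_smul]
  · intro a ha _
    rw [Finset.mem_sigma] at ha
    intro heq
    have hne : a.1 ≠ a.2 := (Finset.ne_of_mem_erase ha.2).symm
    exact hne (congrArg Sigma.fst heq).symm
  · intro a ha
    rw [Finset.mem_sigma] at ha ⊢
    exact ⟨Finset.mem_of_mem_erase ha.2,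
      Finset.mem_erase.2 ⟨(Finset.ne_of_mem_erase ha.2).symm, ha.1⟩⟩
  · intro a _
    rfl

lemma DHDbig (x : Amb n) :
    Dbig S n (Hbig S n (Dbig S n (Finsupp.single x (1:S)))) = Dbig S n (Finsupp.single x 1) := by
  obtain ⟨m, T⟩ := x
  conv_lhs => rw [Dbig_single]
  rw [map_sum, map_sum]
  have hterm : ∀ i ∈ T, Dbig S n (Hbig S n (((-1 : S) ^ ((T.filter fun t => t < i).card)) •
        Finsupp.single ((m + Finsupp.single i 1, T.erase i) : Amb n) (1:S))) =
      ((-1 : S) ^ ((T.filter fun t => t < i).card)) •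
        (Finsupp.single ((m + Finsupp.single i 1, T.erase i) : Amb n) (1:S)
          - Hbig S n (Dbig S n (Finsupp.single ((m + Finsupp.single i 1, T.erase i) : Amb n) (1:S)))) := by
    intro i _
    rw [map_smul, map_smul]
    congr 1
    have hs : ((m + Finsupp.single i 1, T.erase i) : Amb n).1.support.Nonempty := by
      simp only [supp_add_single]
      exact Finset.insert_nonempty _ _
    exact eq_sub_of_add_eq (homotopy_id (S := S) (m + Finsupp.single i 1, T.erase i) hs)
  rw [Finset.sum_congr rfl hterm]
  simp only [smul_sub]
  rw [Finset.sum_sub_distrib]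
  have h2 : ∑ i ∈ T, ((-1 : S) ^ ((T.filter fun t => t < i).card)) •
      Hbig S n (Dbig S n (Finsupp.single ((m + Finsupp.single i 1, T.erase i) : Amb n) (1:S)))
      = Hbig S n (Dbig S n (Dbig S n (Finsupp.single ((m, T) : Amb n) (1:S)))) := by
    conv_rhs => rw [Dbig_single]
    rw [map_sum, map_sum]
    exact Finset.sum_congr rfl fun i _ => by rw [map_smul, map_smul]
  rw [h2, Dbig_Dbig, map_zero, sub_zero, Dbig_single]

lemma mon_supp_nonempty {n s : ℕ} (m : MonIdx n (s+1)) : m.1.support.Nonempty := by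
  rw [Finsupp.support_nonempty_iff]
  intro h
  have h2 := m.2
  rw [h] at h2
  simp at h2

lemma sum_sub_single {n s : ℕ} (m : Fin n →₀ ℕ) (j : Fin n) (hj : m j ≠ 0)
    (hs : (m.sum fun _ e => e) = s + 1) :
    ((m - Finsupp.single j 1).sum fun _ e => e) = s := by
  have h := sub_add_single_cancel hj
  rw [← h, Finsupp.sum_add_index' (fun _ => rfl) (fun _ _ _ => rfl),
    Finsupp.sum_single_index rfl] at hs
  omega

def Hmap (S : Type*) [CommRing S] (n s p : ℕ) :
    (MIdx n (s+1) p →₀ S) →ₗ[S] (MIdx n s (p+1) →₀ S) :=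
  Finsupp.lsum S fun mt => LinearMap.toSpanSingleton S _ <|
    if hc : ∀ t ∈ mt.2.1, mt.1.1.support.min' (mon_supp_nonempty mt.1) < t then
      Finsupp.single
        ((⟨mt.1.1 - Finsupp.single (mt.1.1.support.min' (mon_supp_nonempty mt.1)) 1,
            sum_sub_single _ _ (Finsupp.mem_support_iff.mp (Finset.min'_mem _ _)) mt.1.2⟩ :
              MonIdx n s),
         (⟨insert (mt.1.1.support.min' (mon_supp_nonempty mt.1)) mt.2.1, by
            rw [Finset.card_insert_of_notMem (fun h => absurd (hc _ h) (lt_irrefl _)), mt.2.2]⟩ :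
              ExtIdx n (p+1))) (1 : S)
    else 0

variable {S : Type*} [CommRing S]

def emb {n s p : ℕ} : MIdx n s p → Amb n := fun mt => (mt.1.1, mt.2.1)

lemma emb_inj {n s p : ℕ} : Function.Injective (emb (n := n) (s := s) (p := p)) := by
  rintro ⟨⟨a,_⟩,⟨b,_⟩⟩ ⟨⟨c,_⟩,⟨d,_⟩⟩ h
  simp only [emb, Prod.mk.injEq] at h
  simp [Prod.ext_iff, Subtype.ext_iff, h.1, h.2]

def toAmb (S : Type*) [CommRing S] {n s p : ℕ} : (MIdx n s p →₀ S) →ₗ[S] (Amb n →₀ S) :=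
  Finsupp.lmapDomain S S emb

lemma toAmb_inj {n s p : ℕ} : Function.Injective (toAmb S (n := n) (s := s) (p := p)) :=
  Finsupp.mapDomain_injective emb_inj

lemma single_scale {X M : Type*} [AddCommMonoid M] [Module S M] (f : (X →₀ S) →ₗ[S] M)
    (a : X) (b : S) : f (Finsupp.single a b) = b • f (Finsupp.single a 1) := by
  rw [← map_smul, Finsupp.smul_single, smul_eq_mul, mul_one]

lemma D_intertwine {n s p : ℕ} (z : MIdx n s (p+1) →₀ S) :
    toAmb S (modelD S n s p z) = Dbig S n (toAmb S z) := by
  induction z using Finsupp.induction_linear with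
  | zero => simp
  | add f g hf hg => simp [map_add, hf, hg]
  | single a b =>
    have l1 := single_scale ((toAmb S).comp (modelD S n s p)) a b
    have l2 := single_scale ((Dbig S n).comp (toAmb S)) a b
    simp only [LinearMap.comp_apply] at l1 l2
    rw [l1, l2]
    congr 1
    obtain ⟨m, T⟩ := a
    -- compute LHS
    rw [show (modelD S n s p) (Finsupp.single (m, T) 1) =
        ∑ i ∈ T.1.attach, ((-1 : S) ^ ((T.1.filter fun j => j < i.1).card)) •
          Finsupp.single
            ((⟨m.1 + Finsupp.single i.1 1, by
                rw [Finsupp.sum_add_index' (fun _ => rfl) (fun _ _ _ => rfl), m.2,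
                  Finsupp.sum_single_index rfl]⟩ : MonIdx n (s + 1)),
             (⟨T.1.erase i.1, by simp [Finset.card_erase_of_mem i.2, T.2]⟩ : ExtIdx n p)) (1 : S)
      from by simp [modelD]]
    rw [map_sum]
    simp only [map_smul, toAmb, Finsupp.lmapDomain_apply, Finsupp.mapDomain_single, emb]
    rw [Finset.sum_attach T.1 (fun x => ((-1 : S) ^ ((T.1.filter fun j => j < x).card)) •
      Finsupp.single ((m.1 + Finsupp.single x 1, T.1.erase x) : Amb n) (1 : S))]
    rw [Dbig_single]

lemma H_intertwine {n s p : ℕ} (z : MIdx n (s+1) p →₀ S) :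
    toAmb S (Hmap S n s p z) = Hbig S n (toAmb S z) := by
  induction z using Finsupp.induction_linear with
  | zero => simp
  | add f g hf hg => simp [map_add, hf, hg]
  | single a b =>
    have l1 := single_scale ((toAmb S).comp (Hmap S n s p)) a b
    have l2 := single_scale ((Hbig S n).comp (toAmb S)) a b
    simp only [LinearMap.comp_apply] at l1 l2
    rw [l1, l2]
    congr 1
    obtain ⟨m, T⟩ := a
    have hsup : ((emb ((m, T) : MIdx n (s+1) p)).1 : Fin n →₀ ℕ).support.Nonempty :=
      mon_supp_nonempty m
    by_cases hc : ∀ t ∈ T.1, m.1.support.min' (mon_supp_nonempty m) < t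
    · rw [show (Hmap S n s p) (Finsupp.single (m, T) 1) =
          Finsupp.single
            ((⟨m.1 - Finsupp.single (m.1.support.min' (mon_supp_nonempty m)) 1,
                sum_sub_single _ _ (Finsupp.mem_support_iff.mp (Finset.min'_mem _ _)) m.2⟩ :
                  MonIdx n s),
             (⟨insert (m.1.support.min' (mon_supp_nonempty m)) T.1, by
                rw [Finset.card_insert_of_notMem (fun h => absurd (hc _ h) (lt_irrefl _)), T.2]⟩ :
                  ExtIdx n (p+1))) (1 : S)
        from by simp [Hmap, dif_pos hc]]
      have htA : ∀ (q r : ℕ) (a : MIdx n q r), toAmb S (Finsupp.single a (1:S)) =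
          Finsupp.single (emb a) 1 := fun q r a => Finsupp.mapDomain_single
      rw [htA, htA, Hbig_single _ hsup hc]
      rfl
    · rw [show (Hmap S n s p) (Finsupp.single (m, T) 1) = 0 from by simp [Hmap, dif_neg hc]]
      have htA : toAmb S (Finsupp.single ((m,T) : MIdx n (s+1) p) (1:S)) =
          Finsupp.single (emb (m,T)) 1 := Finsupp.mapDomain_single
      rw [htA, Hbig_single_of_not _ (fun ⟨h, hh⟩ => hc hh), map_zero]

lemma DHD_lin (n : ℕ) : ((Dbig S n) ∘ₗ (Hbig S n)) ∘ₗ (Dbig S n) = Dbig S n := by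
  refine Finsupp.lhom_ext fun a b => ?_
  rw [single_scale (((Dbig S n) ∘ₗ (Hbig S n)) ∘ₗ (Dbig S n)) a b, single_scale (Dbig S n) a b]
  simp only [LinearMap.comp_apply]
  rw [DHDbig]

theorem dhd_model (n s p : ℕ) :
    (modelD S n s p) ∘ₗ ((Hmap S n s p) ∘ₗ (modelD S n s p)) = modelD S n s p := by
  refine LinearMap.ext fun z => toAmb_inj ?_
  simp only [LinearMap.comp_apply]
  rw [D_intertwine, H_intertwine, D_intertwine]
  exact LinearMap.congr_fun (DHD_lin n) (toAmb S z)


noncomputable section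
open TensorProduct
variable (S : Type*) [CommRing S]

/-- additive cast map on finsupps -/
def castF (Y : Type*) : (Y →₀ ℤ) →+ (Y →₀ S) :=
  Finsupp.mapRange.addMonoidHom (Int.castAddHom S)

@[simp] lemma castF_single {Y : Type*} (y : Y) (c : ℤ) :
    castF S Y (Finsupp.single y c) = Finsupp.single y (c : S) := by
  ext a; simp [castF, Finsupp.mapRange_apply, Finsupp.single_apply, apply_ite (fun z : ℤ => (z : S))]

lemma castF_zsmul {Y : Type*} (c : ℤ) (w : Y →₀ ℤ) :
    castF S Y (c • w) = (c : S) • castF S Y w := by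
  ext y
  simp [castF, Finsupp.mapRange_apply]

/-- S-linear version of finsuppScalarRight -/
def Phi (X : Type*) [DecidableEq X] : (S ⊗[ℤ] (X →₀ ℤ)) ≃ₗ[S] (X →₀ S) := by
  refine
    { toFun := TensorProduct.finsuppScalarRight ℤ ℤ S X
      map_add' := map_add _
      map_smul' := ?_
      invFun := (TensorProduct.finsuppScalarRight ℤ ℤ S X).symm
      left_inv := (TensorProduct.finsuppScalarRight ℤ ℤ S X).left_inv
      right_inv := (TensorProduct.finsuppScalarRight ℤ ℤ S X).right_inv }
  intro c t
  simp only [RingHom.id_apply]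
  induction t with
  | zero => simp
  | tmul a m =>
    rw [TensorProduct.smul_tmul']
    ext x
    simp only [TensorProduct.finsuppScalarRight_apply_tmul_apply, Finsupp.smul_apply]
    exact smul_comm _ _ _
  | add u v hu hv =>
    rw [smul_add, map_add, map_add, hu, hv, smul_add]

lemma Phi_tmul {X : Type*} [DecidableEq X] (b : S) (w : X →₀ ℤ) :
    Phi S X (b ⊗ₜ[ℤ] w) = b • castF S X w := by
  have : Phi S X (b ⊗ₜ[ℤ] w) = TensorProduct.finsuppScalarRight ℤ ℤ S X (b ⊗ₜ[ℤ] w) := rfl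
  rw [this]
  ext x
  simp [castF, Finsupp.mapRange_apply, zsmul_eq_mul, mul_comm]

/-- base change of an integer-matrix-defined map -/
def castLM {X Y : Type*} (f : (X →₀ ℤ) →ₗ[ℤ] (Y →₀ ℤ)) : (X →₀ S) →ₗ[S] (Y →₀ S) :=
  Finsupp.lsum S fun x => LinearMap.toSpanSingleton S _ (castF S Y (f (Finsupp.single x 1)))

lemma castLM_single {X Y : Type*} (f : (X →₀ ℤ) →ₗ[ℤ] (Y →₀ ℤ)) (x : X) (b : S) :
    castLM S f (Finsupp.single x b) = b • castF S Y (f (Finsupp.single x 1)) := by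
  simp [castLM]

lemma castLM_castF {X Y : Type*} (f : (X →₀ ℤ) →ₗ[ℤ] (Y →₀ ℤ)) (m : X →₀ ℤ) :
    castLM S f (castF S X m) = castF S Y (f m) := by
  induction m using Finsupp.induction_linear with
  | zero => simp
  | add u v hu hv => simp only [map_add, hu, hv]
  | single x c =>
    rw [castF_single, castLM_single]
    have : Finsupp.single x c = c • Finsupp.single x (1:ℤ) := by
      rw [Finsupp.smul_single, smul_eq_mul, mul_one]
    rw [this, map_smul, castF_zsmul]

lemma castLM_natural {X Y : Type*} [DecidableEq X] [DecidableEq Y] (f : (X →₀ ℤ) →ₗ[ℤ] (Y →₀ ℤ)) (t : S ⊗[ℤ] (X →₀ ℤ)) :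
    castLM S f (Phi S X t) = Phi S Y (f.baseChange S t) := by
  induction t with
  | zero =>
    have h1 : Phi S X 0 = 0 := map_zero (Phi S X).toLinearMap
    have h2 : Phi S Y 0 = 0 := map_zero (Phi S Y).toLinearMap
    rw [show ((Phi S X) 0 : X →₀ S) = 0 from h1, map_zero, map_zero, h2]
  | tmul b w =>
    rw [Phi_tmul, map_smul, castLM_castF, LinearMap.baseChange_tmul, Phi_tmul]
  | add u v hu hv => simp only [map_add, hu, hv]

lemma castLM_id {X : Type*} : castLM S (LinearMap.id : (X →₀ ℤ) →ₗ[ℤ] (X →₀ ℤ)) = LinearMap.id := by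
  refine Finsupp.lhom_ext fun x b => ?_
  simp [castLM_single, Finsupp.smul_single]

lemma castLM_comp {X Y Z : Type*} (f : (X →₀ ℤ) →ₗ[ℤ] (Y →₀ ℤ)) (g : (Y →₀ ℤ) →ₗ[ℤ] (Z →₀ ℤ)) :
    castLM S (g ∘ₗ f) = (castLM S g) ∘ₗ (castLM S f) := by
  refine Finsupp.lhom_ext fun x b => ?_
  rw [LinearMap.comp_apply, castLM_single, castLM_single, map_smul, castLM_castF,
    LinearMap.comp_apply]

lemma castLM_sub {X Y : Type*} (f g : (X →₀ ℤ) →ₗ[ℤ] (Y →₀ ℤ)) :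
    castLM S (f - g) = castLM S f - castLM S g := by
  refine Finsupp.lhom_ext fun x b => ?_
  simp only [castLM_single, LinearMap.sub_apply]
  rw [map_sub, smul_sub]


section CastModel

open TensorProduct

variable (S : Type*) [CommRing S]

lemma modelD_cast (n s p : ℕ) : modelD S n s p = castLM S (modelD ℤ n s p) := by
  refine Finsupp.lhom_ext fun mt b => ?_
  rw [castLM_single, single_scale (modelD S n s p) mt b]
  congr 1
  obtain ⟨m, T⟩ := mt
  rw [show (modelD ℤ n s p) (Finsupp.single (m, T) 1) =
      ∑ i ∈ T.1.attach, ((-1 : ℤ) ^ ((T.1.filter fun j => j < i.1).card)) •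
        Finsupp.single
          ((⟨m.1 + Finsupp.single i.1 1, by
              rw [Finsupp.sum_add_index' (fun _ => rfl) (fun _ _ _ => rfl), m.2,
                Finsupp.sum_single_index rfl]⟩ : MonIdx n (s + 1)),
           (⟨T.1.erase i.1, by simp [Finset.card_erase_of_mem i.2, T.2]⟩ : ExtIdx n p)) (1 : ℤ)
    from by simp [modelD]]
  rw [map_sum (castF S (MIdx n (s+1) p))]
  rw [show (modelD S n s p) (Finsupp.single (m, T) 1) =
      ∑ i ∈ T.1.attach, ((-1 : S) ^ ((T.1.filter fun j => j < i.1).card)) •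
        Finsupp.single
          ((⟨m.1 + Finsupp.single i.1 1, by
              rw [Finsupp.sum_add_index' (fun _ => rfl) (fun _ _ _ => rfl), m.2,
                Finsupp.sum_single_index rfl]⟩ : MonIdx n (s + 1)),
           (⟨T.1.erase i.1, by simp [Finset.card_erase_of_mem i.2, T.2]⟩ : ExtIdx n p)) (1 : S)
    from by simp [modelD]]
  refine Finset.sum_congr rfl fun i _ => ?_
  rw [castF_zsmul, castF_single]
  push_cast
  norm_num

lemma Hmap_cast (n s p : ℕ) : Hmap S n s p = castLM S (Hmap ℤ n s p) := by
  refine Finsupp.lhom_ext fun mt b => ?_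
  rw [castLM_single, single_scale (Hmap S n s p) mt b]
  congr 1
  obtain ⟨m, T⟩ := mt
  by_cases hc : ∀ t ∈ T.1, m.1.support.min' (mon_supp_nonempty m) < t
  · rw [show (Hmap ℤ n s p) (Finsupp.single (m, T) 1) =
        Finsupp.single
          ((⟨m.1 - Finsupp.single (m.1.support.min' (mon_supp_nonempty m)) 1,
              sum_sub_single _ _ (Finsupp.mem_support_iff.mp (Finset.min'_mem _ _)) m.2⟩ :
                MonIdx n s),
           (⟨insert (m.1.support.min' (mon_supp_nonempty m)) T.1, by
              rw [Finset.card_insert_of_notMem (fun h => absurd (hc _ h) (lt_irrefl _)), T.2]⟩ :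
                ExtIdx n (p+1))) (1 : ℤ)
      from by simp [Hmap, dif_pos hc]]
    rw [show (Hmap S n s p) (Finsupp.single (m, T) 1) =
        Finsupp.single
          ((⟨m.1 - Finsupp.single (m.1.support.min' (mon_supp_nonempty m)) 1,
              sum_sub_single _ _ (Finsupp.mem_support_iff.mp (Finset.min'_mem _ _)) m.2⟩ :
                MonIdx n s),
           (⟨insert (m.1.support.min' (mon_supp_nonempty m)) T.1, by
              rw [Finset.card_insert_of_notMem (fun h => absurd (hc _ h) (lt_irrefl _)), T.2]⟩ :
                ExtIdx n (p+1))) (1 : S)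
      from by simp [Hmap, dif_pos hc]]
    rw [castF_single]
    norm_num
  · rw [show (Hmap ℤ n s p) (Finsupp.single (m, T) 1) = 0 from by simp [Hmap, dif_neg hc]]
    rw [show (Hmap S n s p) (Finsupp.single (m, T) 1) = 0 from by simp [Hmap, dif_neg hc]]
    rw [map_zero]

end CastModel

lemma mon_le {n s : ℕ} (m : MonIdx n s) (i : Fin n) : m.1 i ≤ s := by
  by_cases h : i ∈ m.1.support
  · calc m.1 i ≤ ∑ a ∈ m.1.support, m.1 a :=
        Finset.single_le_sum (fun _ _ => Nat.zero_le _) h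
      _ = s := m.2
  · simp [Finsupp.notMem_support_iff.1 h]

instance monIdxFinite {n s : ℕ} : Finite (MonIdx n s) := by
  have hinj : Function.Injective (fun m : MonIdx n s =>
      (fun i => (⟨m.1 i, Nat.lt_succ_of_le (mon_le m i)⟩ : Fin (s+1)))) := by
    intro a b h
    apply Subtype.ext
    ext i
    exact congrArg Fin.val (congrFun h i)
  exact Finite.of_injective _ hinj

universe u

open TensorProduct in
theorem model_differential_kernel_base_change_and_free
    (S : Type u) [CommRing S] (n s p : ℕ) :
    -- base change: `ker(∂^s over S) ≅ S ⊗_ℤ ker(∂^s over ℤ)`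
    Nonempty ((LinearMap.ker (modelD S n s p)) ≃ₗ[S]
      (TensorProduct ℤ S (LinearMap.ker (modelD ℤ n s p)))) ∧
    -- freeness of the kernel over `S`
    ∃ ι : Type u, Nonempty ((LinearMap.ker (modelD S n s p)) ≃ₗ[S] (ι →₀ S)) := by
  classical
  set DZ := modelD ℤ n s p with hDZ
  set K : Submodule ℤ (MIdx n s (p+1) →₀ ℤ) := LinearMap.ker DZ with hK
  set qZ : (MIdx n s (p+1) →₀ ℤ) →ₗ[ℤ] (MIdx n s (p+1) →₀ ℤ) :=
    LinearMap.id - (Hmap ℤ n s p) ∘ₗ (modelD ℤ n s p) with hqZ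
  have hDq : ∀ x, modelD ℤ n s p (qZ x) = 0 := by
    intro x
    have hh := LinearMap.congr_fun (dhd_model (S := ℤ) n s p) x
    simp only [LinearMap.comp_apply] at hh
    simp only [hqZ, LinearMap.sub_apply, LinearMap.id_apply, LinearMap.comp_apply, map_sub]
    rw [hh, sub_self]
  have hq_mem : ∀ x, qZ x ∈ K := fun x => LinearMap.mem_ker.2 (hDq x)
  set r : (MIdx n s (p+1) →₀ ℤ) →ₗ[ℤ] K := LinearMap.codRestrict K qZ hq_mem with hr
  have hrK : ∀ y : K, r y.1 = y := by
    intro y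
    apply Subtype.ext
    have hy : modelD ℤ n s p y.1 = 0 := LinearMap.mem_ker.1 y.2
    show qZ y.1 = y.1
    simp [hqZ, hy]
  set ψ : (S ⊗[ℤ] K) →ₗ[S] (MIdx n s (p+1) →₀ S) :=
    (Phi S _).toLinearMap ∘ₗ (K.subtype.baseChange S) with hψ
  have hinj : Function.Injective ψ := by
    have hleft : (r.baseChange S) ∘ₗ (K.subtype.baseChange S) = LinearMap.id := by
      rw [← LinearMap.baseChange_comp,
        show r ∘ₗ K.subtype = LinearMap.id from LinearMap.ext fun y => hrK y,
        LinearMap.baseChange_id]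
    intro u v huv
    have h2 : (K.subtype.baseChange S) u = (K.subtype.baseChange S) v :=
      (Phi S _).injective huv
    calc u = (r.baseChange S) ((K.subtype.baseChange S) u) :=
        (LinearMap.congr_fun hleft u).symm
      _ = (r.baseChange S) ((K.subtype.baseChange S) v) := by rw [h2]
      _ = v := LinearMap.congr_fun hleft v
  have hq_cast : castLM S qZ = LinearMap.id - (Hmap S n s p) ∘ₗ (modelD S n s p) := by
    rw [hqZ, castLM_sub, castLM_id, castLM_comp, ← modelD_cast, ← Hmap_cast]
  have hDsub : DZ ∘ₗ K.subtype = 0 := LinearMap.ext fun y => LinearMap.mem_ker.1 y.2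
  have hrange : LinearMap.range ψ = LinearMap.ker (modelD S n s p) := by
    apply le_antisymm
    · rintro x ⟨u, rfl⟩
      rw [LinearMap.mem_ker]
      rw [hψ]
      simp only [LinearMap.comp_apply, LinearEquiv.coe_coe]
      rw [modelD_cast, castLM_natural, ← LinearMap.comp_apply, ← LinearMap.baseChange_comp,
        ← hDZ, hDsub, LinearMap.baseChange_zero]
      simp only [LinearMap.zero_apply]
      exact map_zero (Phi S (MIdx n (s+1) p)).toLinearMap
    · intro x hx
      set t := (Phi S (MIdx n s (p+1))).symm x with ht
      have hxt : Phi S (MIdx n s (p+1)) t = x := (Phi S _).apply_symm_apply x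
      have hqx : (castLM S qZ) x = x := by
        rw [hq_cast]
        simp only [LinearMap.sub_apply, LinearMap.id_apply, LinearMap.comp_apply]
        rw [LinearMap.mem_ker.1 hx, map_zero, sub_zero]
      have hfact : qZ = K.subtype ∘ₗ r := (LinearMap.subtype_comp_codRestrict _ _ _).symm
      have hx2 : x = ψ ((r.baseChange S) t) := by
        conv_lhs => rw [← hqx, ← hxt, castLM_natural]
        rw [hψ]
        simp only [LinearMap.comp_apply, LinearEquiv.coe_coe]
        rw [hfact, LinearMap.baseChange_comp, LinearMap.comp_apply]
      exact ⟨(r.baseChange S) t, hx2.symm⟩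
  haveI : Module.Finite ℤ (MIdx n s (p+1) →₀ ℤ) := Module.Finite.finsupp
  haveI : IsNoetherian ℤ (MIdx n s (p+1) →₀ ℤ) :=
    isNoetherian_of_isNoetherianRing_of_finite ℤ _
  haveI : Module.Finite ℤ K := Module.Finite.iff_fg.2 (IsNoetherian.noetherian K)
  haveI : Module.Free ℤ K := Module.free_of_finite_type_torsion_free'
  set ι := Module.Free.ChooseBasisIndex ℤ K with hι
  set b : Module.Basis ι ℤ K := Module.Free.chooseBasis ℤ K with hb
  have equiv1 : (S ⊗[ℤ] K) ≃ₗ[S] (LinearMap.ker (modelD S n s p)) :=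
    (LinearEquiv.ofInjective ψ hinj).trans (LinearEquiv.ofEq _ _ hrange)
  refine ⟨⟨equiv1.symm⟩, ⟨ULift.{u} ι, ⟨?_⟩⟩⟩
  exact equiv1.symm.trans ((LinearEquiv.baseChange ℤ S (↥K) (ι →₀ ℤ) b.repr).trans ((Phi S ι).trans
    (Finsupp.domLCongr (Equiv.ulift.{u,0}).symm)))
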